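/- Let X be a real normed space equipped with a partial order whose positive cone X⁺ = {x ∈ X : x ≥ 0} is closed under addition and under multiplication by nonnegative scalars, and suppose that ‖x‖ ≤ ‖x + y‖ whenever x, y ∈ X⁺. Then the function x ↦ −log₂‖x‖ is 1-convex on X⁺ \ {0}: for all x, y ∈ X⁺ \ {0} and t ∈ [0,1], −log₂‖t·x + (1−t)·y‖ ≤ −t·log₂‖x‖ − (1−t)·log₂‖y‖ + 1. -/
import Mathlib


/-- On an ordered real normed space whose positive cone is closed under addition and
nonnegative scalar multiplication, and on which the norm is monotone on the cone,
the function `x ↦ -log₂ ‖x‖` is `1`-convex on `X⁺ \ {0}`. -/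
theorem stmt_3 {X : Type*} [NormedAddCommGroup X] [NormedSpace ℝ X] [PartialOrder X]
    (hadd : ∀ x y : X, 0 ≤ x → 0 ≤ y → 0 ≤ x + y)
    (hsmul : ∀ (t : ℝ) (x : X), 0 ≤ t → 0 ≤ x → 0 ≤ t • x)
    (hnorm : ∀ x y : X, 0 ≤ x → 0 ≤ y → ‖x‖ ≤ ‖x + y‖) :
    ∀ x y : X, 0 ≤ x → x ≠ 0 → 0 ≤ y → y ≠ 0 → ∀ t : ℝ, 0 ≤ t → t ≤ 1 →
      -Real.logb 2 ‖t • x + (1 - t) • y‖ ≤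
        -(t * Real.logb 2 ‖x‖) - (1 - t) * Real.logb 2 ‖y‖ + 1 := by
  intro x y hx hx0 hy hy0 t ht0 ht1
  have ha : (0:ℝ) < ‖x‖ := norm_pos_iff.mpr hx0
  have hb : (0:ℝ) < ‖y‖ := norm_pos_iff.mpr hy0
  have hL : (0:ℝ) < Real.log 2 := Real.log_pos one_lt_two
  rcases eq_or_lt_of_le ht0 with h0 | h0
  · -- t = 0
    rw [← h0]
    simp
  rcases eq_or_lt_of_le ht1 with h1 | h1
  · -- t = 1
    subst h1
    simp
  -- 0 < t < 1
  have ht1' : (0:ℝ) < 1 - t := by linarith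
  have h1n : t * ‖x‖ ≤ ‖t • x + (1 - t) • y‖ := by
    have := hnorm (t • x) ((1 - t) • y) (hsmul t x ht0 hx) (hsmul (1 - t) y ht1'.le hy)
    simpa [norm_smul, abs_of_nonneg ht0] using this
  have h2n : (1 - t) * ‖y‖ ≤ ‖t • x + (1 - t) • y‖ := by
    have := hnorm ((1 - t) • y) (t • x) (hsmul (1 - t) y ht1'.le hy) (hsmul t x ht0 hx)
    rw [add_comm] at this
    simpa [norm_smul, abs_of_nonneg ht1'.le] using this
  set n := ‖t • x + (1 - t) • y‖ with hn
  have hnpos : (0:ℝ) < n := lt_of_lt_of_le (mul_pos h0 ha) h1n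
  have L1 : Real.log t + Real.log ‖x‖ ≤ Real.log n := by
    rw [← Real.log_mul h0.ne' ha.ne']
    exact Real.log_le_log (mul_pos h0 ha) h1n
  have L2 : Real.log (1 - t) + Real.log ‖y‖ ≤ Real.log n := by
    rw [← Real.log_mul ht1'.ne' hb.ne']
    exact Real.log_le_log (mul_pos ht1' hb) h2n
  have hE : -(Real.log 2) ≤ t * Real.log t + (1 - t) * Real.log (1 - t) := by
    have := Real.binEntropy_le_log_two (p := t)
    simp only [Real.binEntropy, Real.log_inv] at this
    nlinarith
  have main : t * Real.log ‖x‖ + (1 - t) * Real.log ‖y‖ - Real.log 2 ≤ Real.log n := by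
    have A := mul_le_mul_of_nonneg_left L1 ht0
    have B := mul_le_mul_of_nonneg_left L2 ht1'.le
    nlinarith
  -- convert to logb
  have hmain' : (t * Real.log ‖x‖ + (1 - t) * Real.log ‖y‖ - Real.log 2) / Real.log 2 ≤
      Real.log n / Real.log 2 := by gcongr
  simp only [Real.logb]
  have e : (t * Real.log ‖x‖ + (1 - t) * Real.log ‖y‖ - Real.log 2) / Real.log 2 =
      t * (Real.log ‖x‖ / Real.log 2) + (1 - t) * (Real.log ‖y‖ / Real.log 2) - 1 := by
    field_simp
  rw [e] at hmain'
  linarith
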